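/- Let ρ : A_ℂ → End(V) be a finite-dimensional irreducible representation of the complexified fusion ring A_ℂ with formal codegree α_ρ (so ρ(z_ρ) = α_ρ·id_V). Then for all v₁, v₂ ∈ V and all linear functionals f₁, f₂ ∈ V*: Σ_{i∈I} f₁(ρ(b_i)v₁) · f₂(ρ(b_{i*})v₂) = α_ρ · f₂(v₁) · f₁(v₂). -/

import Mathlib

open scoped BigOperators

/-- A fusion ring datum: finite index set `I`, unit index `zero`, duality involution `dual`,
and structure constants `N` satisfying associativity, unit, duality and symmetry axioms. -/
structure FusionData (I : Type*) [Fintype I] [DecidableEq I] where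
  zero : I
  dual : I → I
  N : I → I → I → ℕ
  dual_dual : ∀ i, dual (dual i) = i
  dual_zero : dual zero = zero
  assoc : ∀ i j k l, ∑ m, N i j m * N m k l = ∑ m, N j k m * N i m l
  unit_left : ∀ j m, N zero j m = if j = m then 1 else 0
  unit_right : ∀ i m, N i zero m = if i = m then 1 else 0
  duality : ∀ i j, N i j zero = if j = dual i then 1 else 0
  sym1 : ∀ i j m, N i j m = N j (dual m) (dual i)
  sym2 : ∀ i j m, N i j m = N (dual m) i (dual j)
  sym3 : ∀ i j m, N i j m = N (dual j) (dual i) (dual m)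

theorem schur_aux {A : Type*} [Ring A] [Algebra ℂ A]
    {V : Type*} [AddCommGroup V] [Module ℂ V] [FiniteDimensional ℂ V] [Nontrivial V]
    (ρ : A →ₐ[ℂ] Module.End ℂ V)
    (hirr : ∀ W : Submodule ℂ V, (∀ a : A, ∀ v ∈ W, ρ a v ∈ W) → W = ⊥ ∨ W = ⊤)
    (g : Module.End ℂ V) (hg : ∀ (a : A) (v : V), g (ρ a v) = ρ a (g v)) :
    ∃ c : ℂ, ∀ v : V, g v = c • v := by
  obtain ⟨c, hc⟩ := Module.End.exists_eigenvalue g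
  refine ⟨c, ?_⟩
  have hW : ∀ a : A, ∀ v ∈ g.eigenspace c, ρ a v ∈ g.eigenspace c := by
    intro a v hv
    rw [Module.End.mem_eigenspace_iff] at hv ⊢
    rw [hg, hv, map_smul]
  rcases hirr _ hW with h | h
  · exact absurd h hc
  · intro v
    have : v ∈ g.eigenspace c := h ▸ Submodule.mem_top
    exact Module.End.mem_eigenspace_iff.mp this

/-- Burnside's theorem: an irreducible finite-dimensional representation over ℂ is surjective
onto `End V`. -/
theorem burnside_aux {A : Type*} [Ring A] [Algebra ℂ A]
    {V : Type*} [AddCommGroup V] [Module ℂ V] [FiniteDimensional ℂ V] [Nontrivial V]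
    (ρ : A →ₐ[ℂ] Module.End ℂ V)
    (hirr : ∀ W : Submodule ℂ V, (∀ a : A, ∀ v ∈ W, ρ a v ∈ W) → W = ⊥ ∨ W = ⊤)
    (f : Module.End ℂ V) : ∃ a : A, ρ a = f := by
  classical
  letI instAV : Module A V :=
    { smul := fun a v => ρ a v
      one_smul := fun v => by show ρ 1 v = v; rw [map_one]; rfl
      mul_smul := fun a b v => by show ρ (a * b) v = ρ a (ρ b v); rw [map_mul]; rfl
      smul_zero := fun a => map_zero (ρ a)
      smul_add := fun a v w => map_add (ρ a) v w
      add_smul := fun a b v => by show ρ (a + b) v = ρ a v + ρ b v; rw [map_add]; rfl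
      zero_smul := fun v => by show ρ 0 v = 0; rw [map_zero]; rfl }
  have hsmul : ∀ (a : A) (v : V), a • v = ρ a v := fun _ _ => rfl
  have hCsmul : ∀ (c : ℂ) (v : V), (algebraMap ℂ A c) • v = c • v := by
    intro c v
    rw [hsmul, AlgHom.commutes]
    simp [Algebra.algebraMap_eq_smul_one]
  -- V is a simple A-module
  haveI : Nontrivial (Submodule A V) := by
    obtain ⟨v, hv⟩ := exists_ne (0 : V)
    refine ⟨⊥, ⊤, fun h => hv ?_⟩
    have : v ∈ (⊥ : Submodule A V) := h ▸ Submodule.mem_top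
    simpa using this
  haveI : IsSimpleModule A V := by
    refine { eq_bot_or_eq_top := ?_ }
    intro W
    let W' : Submodule ℂ V :=
      { carrier := W
        add_mem' := fun h1 h2 => W.add_mem h1 h2
        zero_mem' := W.zero_mem
        smul_mem' := fun c x hx => by
          have := W.smul_mem (algebraMap ℂ A c) hx
          rwa [hCsmul] at this }
    have hmem : ∀ x : V, x ∈ W' ↔ x ∈ W := fun x => Iff.rfl
    rcases hirr W' (fun a v hv => by
        have := W.smul_mem a (hv : v ∈ W); rwa [hsmul] at this) with h | h
    · left
      ext x
      simp only [Submodule.mem_bot]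
      rw [← hmem, h]
      simp
    · right
      ext x
      simp only [Submodule.mem_top, iff_true]
      rw [← hmem, h]
      trivial
  haveI : IsSemisimpleModule A V := by
    apply IsSemisimpleModule.of_sSup_simples_eq_top
    rw [eq_top_iff]
    exact le_sSup (IsSimpleModule.congr (Submodule.topEquiv (R := A) (M := V)))
  -- the A-module Fin n → V is semisimple
  set n := Module.finrank ℂ V with hn
  let s : Module.Basis (Fin n) ℂ V := Module.finBasis ℂ V
  haveI : IsSemisimpleModule A (Fin n → V) := by
    apply isSemisimpleModule_of_isSemisimpleModule_submodule'
      (p := fun k : Fin n => LinearMap.range (LinearMap.single A (fun _ : Fin n => V) k))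
    · intro k
      have hinj : Function.Injective (LinearMap.single A (fun _ : Fin n => V) k) := by
        intro x y h
        have := congrFun (congrArg (fun z => (z : Fin n → V)) h) k
        simpa using this
      exact IsSemisimpleModule.congr (LinearEquiv.ofInjective _ hinj).symm
    · exact LinearMap.iSup_range_single A (fun _ : Fin n => V)
  -- the cyclic submodule generated by the basis vector tuple
  set vv : Fin n → V := fun k => s k with hvv
  set W : Submodule A (Fin n → V) := Submodule.span A {vv} with hW
  obtain ⟨C, hC⟩ := exists_isCompl W
  set P : (Fin n → V) →ₗ[A] (Fin n → V) := W.subtype.comp (W.projectionOnto C hC) with hP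
  have hPW : ∀ x ∈ W, P x = x := by
    intro x hx
    have := Submodule.linearProjOfIsCompl_apply_left hC ⟨x, hx⟩
    simp only [hP, LinearMap.comp_apply]
    rw [this]
    rfl
  have hPrange : ∀ x, P x ∈ W := fun x => (W.projectionOnto C hC x).2
  -- matrix entries of P are scalars
  have key : ∀ k l : Fin n, ∃ c : ℂ, ∀ v : V, P (Pi.single l v) k = c • v := by
    intro k l
    have hgadd : ∀ v w : V, P (Pi.single l (v + w)) k
        = P (Pi.single l v) k + P (Pi.single l w) k := by
      intro v w
      rw [Pi.single_add, map_add]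
      rfl
    have hA : ∀ (a : A) (v : V), (Pi.single l (a • v) : Fin n → V) = a • (Pi.single l v : Fin n → V) := by
      intro a v
      funext j
      rw [Pi.smul_apply]
      rcases eq_or_ne j l with h | h
      · subst h; rw [Pi.single_eq_same, Pi.single_eq_same]
      · rw [Pi.single_eq_of_ne h, Pi.single_eq_of_ne h, smul_zero]
    have hgsmul : ∀ (c : ℂ) (v : V), P (Pi.single l (c • v)) k = c • P (Pi.single l v) k := by
      intro c v
      have h1 : (Pi.single l (c • v) : Fin n → V) = Pi.single l ((algebraMap ℂ A c) • v) := by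
        rw [hCsmul]
      rw [h1, hA, map_smul, Pi.smul_apply, hCsmul]
    refine schur_aux ρ hirr
      ⟨⟨fun v => P (Pi.single l v) k, fun x y => hgadd x y⟩, fun cc x => hgsmul cc x⟩ ?_
    intro a v
    show P (Pi.single l (ρ a v)) k = ρ a (P (Pi.single l v) k)
    rw [← hsmul a v, ← hsmul a (P (Pi.single l v) k), hA, map_smul, Pi.smul_apply]
  choose c hc using key
  have hPmat : ∀ (x : Fin n → V) (k : Fin n), P x k = ∑ l, c k l • x l := by
    intro x k
    conv_lhs => rw [← Finset.univ_sum_single x, map_sum]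
    rw [Finset.sum_apply]
    exact Finset.sum_congr rfl fun l _ => hc k l (x l)
  -- f applied entrywise to vv stays in W
  have hvvW : vv ∈ W := Submodule.mem_span_singleton_self vv
  have hPvv : P vv = vv := hPW vv hvvW
  set w : Fin n → V := fun k => f (vv k) with hw
  have hPw : P w = w := by
    funext k
    rw [hPmat]
    have : ∑ l, c k l • w l = f (∑ l, c k l • vv l) := by
      rw [map_sum]
      exact Finset.sum_congr rfl fun l _ => (map_smul f _ _).symm
    rw [hw] at this ⊢
    rw [this, ← hPmat, hPvv]
  have hwW : w ∈ W := hPw ▸ hPrange w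
  rw [hW, Submodule.mem_span_singleton] at hwW
  obtain ⟨a, ha⟩ := hwW
  refine ⟨a, ?_⟩
  apply s.ext
  intro k
  have := congrFun ha k
  rw [Pi.smul_apply, hsmul] at this
  exact this

/-- Matrix-element form of the codegree lemma: for an irreducible finite-dimensional
representation `ρ` of the complexified fusion ring with formal codegree `α`, vectors
`v₁ v₂` and functionals `f₁ f₂`:
`∑ i, f₁ (ρ (b i) v₁) * f₂ (ρ (b i*) v₂) = α * f₂ v₁ * f₁ v₂`. -/
theorem matrix_element_codegree_identity {I : Type*} [Fintype I] [DecidableEq I]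
    (F : FusionData I)
    {A : Type*} [Ring A] [Algebra ℂ A] (b : Module.Basis I ℂ A)
    (hb1 : b F.zero = 1)
    (hbmul : ∀ i j, b i * b j = ∑ m, (F.N i j m : ℂ) • b m)
    {V : Type*} [AddCommGroup V] [Module ℂ V] [FiniteDimensional ℂ V] [Nontrivial V]
    (ρ : A →ₐ[ℂ] Module.End ℂ V)
    (hirr : ∀ W : Submodule ℂ V, (∀ a : A, ∀ v ∈ W, ρ a v ∈ W) → W = ⊥ ∨ W = ⊤)
    (α : ℂ)
    (hα : ρ (∑ i, (LinearMap.trace ℂ V (ρ (b i))) • b (F.dual i))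
            = α • (1 : Module.End ℂ V))
    (v₁ v₂ : V) (f₁ f₂ : V →ₗ[ℂ] ℂ) :
    ∑ i, f₁ (ρ (b i) v₁) * f₂ (ρ (b (F.dual i)) v₂) = α * f₂ v₁ * f₁ v₂ := by
  classical
  -- trace of a rank-one operator
  have htr : ∀ (g : V →ₗ[ℂ] ℂ) (v : V), LinearMap.trace ℂ V (g.smulRight v) = g v := by
    intro g v
    have h1 : g.smulRight v = (LinearMap.toSpanSingleton ℂ V v).comp g := by
      ext w; simp
    rw [h1, LinearMap.trace_comp_comm']
    have h2 : g.comp (LinearMap.toSpanSingleton ℂ V v) = (g v) • (1 : Module.End ℂ ℂ) := by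
      ext
      simp [mul_comm]
    rw [h2, map_smul, LinearMap.trace_one]
    simp
  -- products of images of basis vectors
  have hmul : ∀ i j : I, (ρ (b i)) * (ρ (b j)) = ∑ m, (F.N i j m : ℂ) • ρ (b m) := by
    intro i j
    rw [← map_mul, hbmul i j, map_sum]
    simp only [map_smul]
  -- the averaging operator Ψ
  set Ψ : Module.End ℂ V →ₗ[ℂ] Module.End ℂ V :=
    ∑ i, LinearMap.smulRight
      ((LinearMap.trace ℂ V).comp (LinearMap.mulLeft ℂ (ρ (b i)))) (ρ (b (F.dual i)))
    with hΨdef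
  have hΨ : ∀ X : Module.End ℂ V,
      Ψ X = ∑ i, (LinearMap.trace ℂ V (ρ (b i) * X)) • ρ (b (F.dual i)) := by
    intro X
    rw [hΨdef]
    simp [LinearMap.sum_apply, LinearMap.smulRight_apply, LinearMap.mulLeft_apply]
  -- the duality involution as a permutation
  have hinv : Function.Involutive F.dual := F.dual_dual
  -- right equivariance of Ψ on basis elements
  have hrE : ∀ (X : Module.End ℂ V) (j : I), Ψ (X * ρ (b j)) = (Ψ X) * ρ (b j) := by
    intro X j
    rw [hΨ, hΨ, Finset.sum_mul]
    have lhs1 : ∀ i : I, (LinearMap.trace ℂ V (ρ (b i) * (X * ρ (b j)))) • ρ (b (F.dual i))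
        = ∑ m, ((F.N j i m : ℂ) * LinearMap.trace ℂ V (ρ (b m) * X)) • ρ (b (F.dual i)) := by
      intro i
      have h1 : LinearMap.trace ℂ V (ρ (b i) * (X * ρ (b j)))
          = LinearMap.trace ℂ V ((ρ (b j) * ρ (b i)) * X) := by
        rw [← mul_assoc, LinearMap.trace_mul_comm, mul_assoc]
      rw [h1, hmul, Finset.sum_mul, map_sum, Finset.sum_smul]
      refine Finset.sum_congr rfl fun m _ => ?_
      rw [smul_mul_assoc, map_smul, smul_eq_mul]
    have rhs1 : ∀ i : I, ((LinearMap.trace ℂ V (ρ (b i) * X)) • ρ (b (F.dual i))) * ρ (b j)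
        = ∑ m, ((F.N (F.dual i) j m : ℂ) * LinearMap.trace ℂ V (ρ (b i) * X)) • ρ (b m) := by
      intro i
      rw [smul_mul_assoc, hmul, Finset.smul_sum]
      refine Finset.sum_congr rfl fun m _ => ?_
      rw [smul_smul, mul_comm]
    simp only [lhs1, rhs1]
    rw [Fintype.sum_equiv hinv.toPerm
      (fun i => ∑ m, ((F.N j i m : ℂ) * LinearMap.trace ℂ V (ρ (b m) * X)) • ρ (b (F.dual i)))
      (fun i => ∑ m, ((F.N j (F.dual i) m : ℂ) * LinearMap.trace ℂ V (ρ (b m) * X)) • ρ (b i))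
      (fun i => by simp [Function.Involutive.coe_toPerm, F.dual_dual])]
    rw [Finset.sum_comm]
    refine Finset.sum_congr rfl fun i _ => Finset.sum_congr rfl fun m _ => ?_
    have h := F.sym2 j (F.dual m) i
    rw [F.dual_dual] at h
    rw [h]
  -- extend equivariance to all algebra elements
  have hrEa : ∀ (X : Module.End ℂ V) (a : A), Ψ (X * ρ a) = (Ψ X) * ρ a := by
    intro X a
    have hmaps : Ψ.comp ((LinearMap.mulLeft ℂ X).comp ρ.toLinearMap)
        = (LinearMap.mulLeft ℂ (Ψ X)).comp ρ.toLinearMap := by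
      apply b.ext
      intro j
      simp only [LinearMap.comp_apply, AlgHom.toLinearMap_apply, LinearMap.mulLeft_apply]
      exact hrE X j
    have := LinearMap.congr_fun hmaps a
    simpa only [LinearMap.comp_apply, AlgHom.toLinearMap_apply, LinearMap.mulLeft_apply]
      using this
  -- Ψ of the identity is α • 1
  have hΨ1 : Ψ 1 = α • 1 := by
    rw [hΨ, ← hα, map_sum]
    refine Finset.sum_congr rfl fun i _ => ?_
    rw [mul_one, map_smul]
  -- Burnside: realize the rank-one operator in the image
  obtain ⟨a₀, ha₀⟩ := burnside_aux ρ hirr (f₁.smulRight v₁)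
  have hfinal : Ψ (f₁.smulRight v₁) = α • (f₁.smulRight v₁) := by
    rw [← ha₀, ← one_mul (ρ a₀), hrEa 1 a₀, hΨ1, smul_mul_assoc, one_mul]
  -- evaluate both sides
  have heval : f₂ ((Ψ (f₁.smulRight v₁)) v₂)
      = ∑ i, f₁ (ρ (b i) v₁) * f₂ (ρ (b (F.dual i)) v₂) := by
    rw [hΨ]
    rw [LinearMap.sum_apply, map_sum]
    refine Finset.sum_congr rfl fun i _ => ?_
    have h3 : ρ (b i) * f₁.smulRight v₁ = f₁.smulRight (ρ (b i) v₁) := by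
      ext w; simp
    rw [LinearMap.smul_apply, map_smul, smul_eq_mul, h3, htr]
  rw [← heval, hfinal]
  rw [LinearMap.smul_apply, map_smul, LinearMap.smulRight_apply, map_smul, smul_eq_mul,
    smul_eq_mul]
  ring
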